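/- Let X be a finite-dimensional real normed space whose modulus of uniform convexity satisfies δ_X(ε) ≥ c²ε² for some c > 0 and all ε ∈ (0,2]. Then there is a constant α > 0 such that every unit vector x admits an outer ellipsoid F with F ⊆ α·B, where B is the unit ball of X. -/

import Mathlib

/-- The modulus of uniform convexity of `X`. -/
noncomputable def uconvMod (X : Type*) [NormedAddCommGroup X] [NormedSpace ℝ X]
    (ε : ℝ) : ℝ :=
  sInf {d : ℝ | ∃ a b : X, ‖a‖ ≤ 1 ∧ ‖b‖ ≤ 1 ∧ ε ≤ ‖a - b‖ ∧
    d = 1 - ‖(1 / 2 : ℝ) • (a + b)‖}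

set_option maxHeartbeats 1600000 in
/-- If the modulus of uniform convexity of a finite-dimensional space satisfies
`δ(ε) ≥ c²ε²`, then there is `α > 0` such that every unit vector `x` admits an outer
ellipsoid `F = {z | B z z ≤ 1}` (so `B z z ≤ ‖z‖²` and `B x x = 1`) with `F ⊆ α·B_X`. -/
theorem stmt15 (X : Type*) [NormedAddCommGroup X] [NormedSpace ℝ X] [FiniteDimensional ℝ X]
    (c : ℝ) (hc : 0 < c)
    (hδ : ∀ ε ∈ Set.Ioc (0 : ℝ) 2, c ^ 2 * ε ^ 2 ≤ uconvMod X ε) :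
    ∃ α > (0 : ℝ), ∀ x : X, ‖x‖ = 1 →
      ∃ B : LinearMap.BilinForm ℝ X, (∀ z w, B z w = B w z) ∧
        (∀ z, z ≠ 0 → 0 < B z z) ∧ (∀ z, B z z ≤ ‖z‖ ^ 2) ∧ B x x = 1 ∧
        ∀ z, B z z ≤ 1 → ‖z‖ ≤ α := by
  classical
  set n := Module.finrank ℝ X with hn
  set E := EuclideanSpace ℝ (Fin n) with hE
  let e : X ≃L[ℝ] E := toEuclidean
  set M : ℝ := ‖(e : X →L[ℝ] E)‖ + 1 with hM
  set m : ℝ := ‖(e.symm : E →L[ℝ] X)‖ + 1 with hm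
  have hM0 : 0 < M := by positivity
  have hm0 : 0 < m := by positivity
  set t₀ : ℝ := c ^ 2 / (1 + 2 * c ^ 2) with ht₀
  have ht₀pos : 0 < t₀ := by positivity
  have ht₀eq : t₀ * (1 + 2 * c ^ 2) = c ^ 2 := by
    rw [ht₀, div_mul_cancel₀]; positivity
  set t : ℝ := t₀ / M ^ 2 with ht
  have htpos : 0 < t := by positivity
  set α : ℝ := Real.sqrt (m ^ 2 / t) + 1 with hα
  have hα0 : 0 < α := by positivity
  clear_value M m t₀ t α
  -- key midpoint estimate from the modulus hypothesis
  have key : ∀ a b : X, ‖a‖ ≤ 1 → ‖b‖ ≤ 1 →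
      c ^ 2 * ‖a - b‖ ^ 2 ≤ 1 - ‖(1 / 2 : ℝ) • (a + b)‖ := by
    intro a b ha hb
    have hmid : ‖(1 / 2 : ℝ) • (a + b)‖ ≤ 1 := by
      rw [norm_smul]
      have : ‖a + b‖ ≤ 2 := le_trans (norm_add_le a b) (by linarith)
      rw [Real.norm_eq_abs, abs_of_pos (by norm_num : (0:ℝ) < 1/2)]
      linarith
    by_cases hab : a = b
    · subst hab
      simp only [sub_self, norm_zero]
      nlinarith
    · have hεpos : 0 < ‖a - b‖ := norm_pos_iff.2 (sub_ne_zero.2 hab)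
      have hεle : ‖a - b‖ ≤ 2 := le_trans (norm_sub_le a b) (by linarith)
      have h1 := hδ ‖a - b‖ ⟨hεpos, hεle⟩
      have h2 : uconvMod X ‖a - b‖ ≤ 1 - ‖(1 / 2 : ℝ) • (a + b)‖ := by
        apply csInf_le
        · refine ⟨0, ?_⟩
          rintro d ⟨a', b', ha', hb', _, rfl⟩
          have : ‖(1 / 2 : ℝ) • (a' + b')‖ ≤ 1 := by
            rw [norm_smul, Real.norm_eq_abs, abs_of_pos (by norm_num : (0:ℝ) < 1/2)]
            have : ‖a' + b'‖ ≤ 2 := le_trans (norm_add_le a' b') (by linarith)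
            linarith
          linarith
        · exact ⟨a, b, ha, hb, le_rfl, rfl⟩
      linarith
  refine ⟨α, hα0, fun x hx => ?_⟩
  obtain ⟨g, hgnorm, hgx0⟩ := exists_dual_vector ℝ x (by
    intro h; rw [h] at hx; norm_num at hx)
  have hgx : g x = 1 := by simpa [hx] using hgx0
  have hg1 : ∀ z : X, |g z| ≤ ‖z‖ := by
    intro z
    have := g.le_opNorm z
    rw [hgnorm, one_mul] at this
    simpa [Real.norm_eq_abs] using this
  -- key pointwise estimate for unit vectors with nonneg functional value
  have unit : ∀ u : X, ‖u‖ = 1 → 0 ≤ g u →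
      t₀ * ‖u - g u • x‖ ^ 2 ≤ 1 - (g u) ^ 2 := by
    intro u hu hgu
    have h1 : c ^ 2 * ‖x - u‖ ^ 2 ≤ 1 - ‖(1 / 2 : ℝ) • (x + u)‖ :=
      key x u (le_of_eq hx) (le_of_eq hu)
    have h2 : (1 + g u) / 2 ≤ ‖(1 / 2 : ℝ) • (x + u)‖ := by
      have hval : g ((1 / 2 : ℝ) • (x + u)) = (1 + g u) / 2 := by
        rw [map_smul, map_add, hgx]; simp; ring
      have := hg1 ((1 / 2 : ℝ) • (x + u))
      rw [hval] at this
      exact le_trans (le_abs_self _) this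
    have hgu1 : g u ≤ 1 := by
      have := hg1 u
      rw [hu] at this
      exact (abs_le.1 this).2
    set d : ℝ := 1 - g u with hd
    set r : ℝ := ‖x - u‖ with hr
    have hr0 : 0 ≤ r := norm_nonneg _
    have hd0 : 0 ≤ d := by simp [hd]; linarith
    have hd1 : d ≤ 1 := by simp [hd]; linarith
    have hcr : 2 * c ^ 2 * r ^ 2 ≤ d := by
      have : c ^ 2 * r ^ 2 ≤ (1 - g u) / 2 := by linarith
      simp only [hd]; linarith
    have htri : ‖u - g u • x‖ ≤ r + d := by
      have hsplit : u - g u • x = (u - x) + (1 - g u) • x := by module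
      have h3 : ‖(1 - g u) • x‖ = d := by
        rw [norm_smul, hx, Real.norm_eq_abs, abs_of_nonneg (by linarith), mul_one]
      have h4 : ‖u - x‖ = r := norm_sub_rev u x
      calc ‖u - g u • x‖ = ‖(u - x) + (1 - g u) • x‖ := by rw [hsplit]
        _ ≤ ‖u - x‖ + ‖(1 - g u) • x‖ := norm_add_le _ _
        _ = r + d := by rw [h3, h4]
    have hp0 : 0 ≤ ‖u - g u • x‖ := norm_nonneg _
    set q : ℝ := ‖u - g u • x‖ with hq
    clear_value q
    -- t₀ q² ≤ t₀ (r+d)² ≤ t₀ (2r²+2d) ≤ d ≤ 2d - d² = 1 - (g u)²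
    have step1 : t₀ * q ^ 2 ≤ t₀ * (2 * r ^ 2 + 2 * d) := by
      have hq2 : q ^ 2 ≤ (r + d) ^ 2 := by nlinarith
      have : (r + d) ^ 2 ≤ 2 * r ^ 2 + 2 * d := by nlinarith [sq_nonneg (r - d)]
      nlinarith
    have step2 : c ^ 2 * (t₀ * (2 * r ^ 2 + 2 * d)) ≤ c ^ 2 * d := by
      have e1 : t₀ * (2 * c ^ 2 * r ^ 2) ≤ t₀ * d :=
        mul_le_mul_of_nonneg_left hcr ht₀pos.le
      nlinarith [ht₀eq]
    have step3 : t₀ * (2 * r ^ 2 + 2 * d) ≤ d := by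
      have hc2 : (0 : ℝ) < c ^ 2 := by positivity
      exact le_of_mul_le_mul_left step2 hc2
    have hgoal : 1 - (g u) ^ 2 = 2 * d - d ^ 2 := by
      simp only [hd]; ring
    rw [hgoal]
    nlinarith
  -- extend to nonnegative functional value, arbitrary norm
  have mainpos : ∀ z : X, 0 ≤ g z →
      t₀ * ‖z - g z • x‖ ^ 2 ≤ ‖z‖ ^ 2 - (g z) ^ 2 := by
    intro z hgz
    rcases eq_or_ne z 0 with rfl | hz
    · simp
    · have hzn : 0 < ‖z‖ := norm_pos_iff.2 hz
      set u : X := ‖z‖⁻¹ • z with hu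
      have hun : ‖u‖ = 1 := by
        rw [hu, norm_smul, Real.norm_eq_abs, abs_of_nonneg (inv_nonneg.2 hzn.le),
          inv_mul_cancel₀ hzn.ne']
      have hgu : g u = ‖z‖⁻¹ * g z := by rw [hu, map_smul]; simp
      have hgu0 : 0 ≤ g u := by
        rw [hgu]; positivity
      have hsub : u - g u • x = ‖z‖⁻¹ • (z - g z • x) := by
        rw [hu, hgu, smul_sub, smul_smul]
      have hnorm : ‖u - g u • x‖ = ‖z‖⁻¹ * ‖z - g z • x‖ := by
        rw [hsub, norm_smul, Real.norm_eq_abs, abs_of_nonneg (inv_nonneg.2 hzn.le)]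
      have h := unit u hun hgu0
      rw [hnorm, hgu] at h
      have hz2 : (0 : ℝ) < ‖z‖ ^ 2 := by positivity
      have := mul_le_mul_of_nonneg_left h hz2.le
      have hinv : ‖z‖ ^ 2 * (‖z‖⁻¹ * ‖z - g z • x‖) ^ 2 = ‖z - g z • x‖ ^ 2 := by
        field_simp
      have hinv2 : ‖z‖ ^ 2 * (‖z‖⁻¹ * g z) ^ 2 = (g z) ^ 2 := by
        field_simp
      nlinarith [this]
  have main : ∀ z : X, t₀ * ‖z - g z • x‖ ^ 2 ≤ ‖z‖ ^ 2 - (g z) ^ 2 := by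
    intro z
    rcases le_or_gt 0 (g z) with h | h
    · exact mainpos z h
    · have hneg : 0 ≤ g (-z) := by rw [map_neg]; linarith
      have := mainpos (-z) hneg
      rw [map_neg] at this
      have heq : ‖-z - (-g z) • x‖ = ‖z - g z • x‖ := by
        rw [show -z - (-g z) • x = -(z - g z • x) by module, norm_neg]
      rw [heq, norm_neg] at this
      nlinarith [this]
  -- linear maps
  set P : X →ₗ[ℝ] X := LinearMap.id - ((g : X →ₗ[ℝ] ℝ).smulRight x) with hP
  have hPapp : ∀ z : X, P z = z - g z • x := by
    intro z; simp [hP]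
  set p : X →ₗ[ℝ] E := ((e : X →L[ℝ] E) : X →ₗ[ℝ] E) ∘ₗ P with hp
  have hpapp : ∀ z : X, p z = e (z - g z • x) := by
    intro z; simp [hp, hPapp]
  -- norm comparisons
  have hupper : ∀ v : X, ‖e v‖ ≤ M * ‖v‖ := by
    intro v
    have h1 := (e : X →L[ℝ] E).le_opNorm v
    have : ‖(e : X →L[ℝ] E)‖ * ‖v‖ ≤ M * ‖v‖ := by
      apply mul_le_mul_of_nonneg_right _ (norm_nonneg v)
      rw [hM]; linarith
    simpa using le_trans h1 this
  have hlower : ∀ v : X, ‖v‖ ≤ m * ‖e v‖ := by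
    intro v
    have h1 := (e.symm : E →L[ℝ] X).le_opNorm (e v)
    have h2 : (e.symm : E →L[ℝ] X) (e v) = v := by simp
    rw [h2] at h1
    refine le_trans h1 ?_
    apply mul_le_mul_of_nonneg_right _ (norm_nonneg (e v))
    rw [hm]; linarith
  -- define the bilinear form
  set B : LinearMap.BilinForm ℝ X := LinearMap.mk₂ ℝ
      (fun z w => g z * g w + t * (inner ℝ (p z) (p w) : ℝ))
      (by intro a b w; simp [map_add, inner_add_left]; ring)
      (by intro s a w; simp [map_smul, real_inner_smul_left]; ring)
      (by intro a b w; simp [map_add, inner_add_right]; ring)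
      (by intro a s w; simp [map_smul, real_inner_smul_right]; ring)
    with hB
  have hBapp : ∀ z w : X, B z w = g z * g w + t * (inner ℝ (p z) (p w) : ℝ) := by
    intro z w; rw [hB]; simp
  have hBd : ∀ z : X, B z z = (g z) ^ 2 + t * ‖p z‖ ^ 2 := by
    intro z
    rw [hBapp, real_inner_self_eq_norm_sq]
    ring
  refine ⟨B, ?_, ?_, ?_, ?_, ?_⟩
  · -- symmetry
    intro z w
    rw [hBapp, hBapp, real_inner_comm]
    ring
  · -- positivity
    intro z hz
    rw [hBd]
    rcases eq_or_ne (g z) 0 with hgz | hgz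
    · have hpz : p z ≠ 0 := by
        rw [hpapp, hgz, zero_smul, sub_zero]
        simpa using hz
      have : 0 < ‖p z‖ := norm_pos_iff.2 hpz
      nlinarith [mul_pos htpos (pow_pos this 2), sq_nonneg (g z)]
    · have : 0 < (g z) ^ 2 := by positivity
      nlinarith [mul_nonneg htpos.le (sq_nonneg ‖p z‖)]
  · -- B z z ≤ ‖z‖²
    intro z
    rw [hBd]
    have h1 : ‖p z‖ ≤ M * ‖z - g z • x‖ := by rw [hpapp]; exact hupper _
    have h2 : ‖p z‖ ^ 2 ≤ M ^ 2 * ‖z - g z • x‖ ^ 2 := by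
      nlinarith [norm_nonneg (p z), norm_nonneg (z - g z • x)]
    have h3 := main z
    have h4 : t * ‖p z‖ ^ 2 ≤ t₀ * ‖z - g z • x‖ ^ 2 := by
      have hM2 : (0:ℝ) < M ^ 2 := by positivity
      rw [ht, div_mul_eq_mul_div, div_le_iff₀ hM2]
      calc t₀ * ‖p z‖ ^ 2 ≤ t₀ * (M ^ 2 * ‖z - g z • x‖ ^ 2) :=
            mul_le_mul_of_nonneg_left h2 ht₀pos.le
        _ = t₀ * ‖z - g z • x‖ ^ 2 * M ^ 2 := by ring
    linarith
  · -- B x x = 1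
    have hpx : p x = 0 := by
      rw [hpapp, hgx, one_smul, sub_self, map_zero]
    rw [hBd, hpx, hgx]
    simp
  · -- the outer bound
    intro z hz
    rw [hBd] at hz
    have hgz2 : (g z) ^ 2 ≤ 1 := by nlinarith [sq_nonneg ‖p z‖, htpos.le, mul_nonneg htpos.le (sq_nonneg ‖p z‖)]
    have hgz : |g z| ≤ 1 := by
      rw [← Real.sqrt_one, ← Real.sqrt_sq_eq_abs]
      exact Real.sqrt_le_sqrt hgz2
    have hpz2 : ‖p z‖ ^ 2 ≤ 1 / t := by
      rw [le_div_iff₀ htpos]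
      nlinarith [sq_nonneg (g z)]
    have hPz : ‖z - g z • x‖ ≤ m * ‖p z‖ := by
      have := hlower (z - g z • x)
      rwa [← hpapp] at this
    have hPz2 : ‖z - g z • x‖ ^ 2 ≤ m ^ 2 / t := by
      have : (m * ‖p z‖) ^ 2 ≤ m ^ 2 / t := by
        rw [mul_pow]
        calc m ^ 2 * ‖p z‖ ^ 2 ≤ m ^ 2 * (1 / t) :=
              mul_le_mul_of_nonneg_left hpz2 (by positivity)
          _ = m ^ 2 / t := by ring
      nlinarith [norm_nonneg (z - g z • x), norm_nonneg (p z), hm0.le]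
    have hPzb : ‖z - g z • x‖ ≤ Real.sqrt (m ^ 2 / t) := by
      rw [show ‖z - g z • x‖ = Real.sqrt (‖z - g z • x‖ ^ 2) by
        rw [Real.sqrt_sq (norm_nonneg _)]]
      exact Real.sqrt_le_sqrt hPz2
    have htriag : ‖z‖ ≤ ‖z - g z • x‖ + |g z| := by
      calc ‖z‖ = ‖(z - g z • x) + g z • x‖ := by rw [sub_add_cancel]
        _ ≤ ‖z - g z • x‖ + ‖g z • x‖ := norm_add_le _ _
        _ = ‖z - g z • x‖ + |g z| := by
            rw [norm_smul, hx, Real.norm_eq_abs, mul_one]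
    rw [hα]
    linarith
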